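/- Let d ≥ 2 and k ≥ 1 be integers, and let G be an n-vertex d-regular graph containing two edges at distance at least 2k + 2 from each other. Then λ₂(G)/λ_n(G) < (d − 2√(d−1))/(d + 2√(d−1)) + 4/((k+1)√(d−1)). -/

import Mathlib

open Matrix SimpleGraph

attribute [local instance] Classical.propDecidable

/-- Eigenvalues of a real square matrix, sorted in non-decreasing order
(junk value `0` if the matrix is not Hermitian). -/
noncomputable def sortedEigs {n : ℕ} (A : Matrix (Fin n) (Fin n) ℝ) : Fin n → ℝ :=
  if h : A.IsHermitian then h.eigenvalues ∘ Tuple.sort h.eigenvalues else 0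

/-- `lapEig G i` is the `i`-th smallest Laplacian eigenvalue of `G` (1-based indexing),
so `lapEig G 2 = λ₂(G)` and `lapEig G n = λₙ(G)`; junk value `0` if `i` is out of range. -/
noncomputable def lapEig {n : ℕ} (G : SimpleGraph (Fin n)) (i : ℕ) : ℝ :=
  if h : i - 1 < n then sortedEigs (G.lapMatrix ℝ) ⟨i - 1, h⟩ else 0

/-- `adjEig G i` is the `i`-th largest adjacency eigenvalue of `G` (1-based indexing),
so `adjEig G 1 = μ₁(G)` and `adjEig G n = μₙ(G)`; junk value `0` if `i` is out of range. -/
noncomputable def adjEig {n : ℕ} (G : SimpleGraph (Fin n)) (i : ℕ) : ℝ :=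
  if h : n - i < n then sortedEigs (G.adjMatrix ℝ) ⟨n - i, h⟩ else 0


section spec
variable {n : ℕ} {A : Matrix (Fin n) (Fin n) ℝ} (hA : A.IsHermitian)

noncomputable def coeffs (z : Fin n → ℝ) : Fin n → ℝ :=
  (star (Matrix.IsHermitian.eigenvectorUnitary hA : Matrix (Fin n) (Fin n) ℝ)) *ᵥ z

lemma coeffs_linear (a b : ℝ) (z w : Fin n → ℝ) :
    coeffs hA (fun v => a * z v + b * w v) = fun i => a * coeffs hA z i + b * coeffs hA w i := by
  unfold coeffs
  have : (fun v => a * z v + b * w v) = a • z + b • w := by ext v; simp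
  rw [this, Matrix.mulVec_add, Matrix.mulVec_smul, Matrix.mulVec_smul]
  ext i; simp

lemma quad_eq (z : Fin n → ℝ) :
    z ⬝ᵥ (A *ᵥ z) = ∑ i, hA.eigenvalues i * (coeffs hA z i)^2 := by
  set V : Matrix (Fin n) (Fin n) ℝ := (Matrix.IsHermitian.eigenvectorUnitary hA : Matrix (Fin n) (Fin n) ℝ) with hV
  have hsp : A = V * Matrix.diagonal (RCLike.ofReal ∘ hA.eigenvalues) * star V :=
    hA.spectral_theorem
  have hVt : star V = Vᵀ := by
    ext i j; simp [star_apply]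
  calc z ⬝ᵥ (A *ᵥ z) = z ⬝ᵥ ((V * Matrix.diagonal (RCLike.ofReal ∘ hA.eigenvalues) * star V) *ᵥ z) := by rw [← hsp]
    _ = ∑ i, hA.eigenvalues i * (coeffs hA z i)^2 := by
        rw [← Matrix.mulVec_mulVec, ← Matrix.mulVec_mulVec, Matrix.dotProduct_mulVec,
          ← Matrix.mulVec_transpose, ← hVt]
        show (coeffs hA z) ⬝ᵥ (Matrix.diagonal (RCLike.ofReal ∘ hA.eigenvalues) *ᵥ (coeffs hA z)) = _
        simp [dotProduct, Matrix.mulVec_diagonal]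
        exact Finset.sum_congr rfl fun i _ => by ring

lemma normsq_eq (z : Fin n → ℝ) :
    z ⬝ᵥ z = ∑ i, (coeffs hA z i)^2 := by
  set V : Matrix (Fin n) (Fin n) ℝ := (Matrix.IsHermitian.eigenvectorUnitary hA : Matrix (Fin n) (Fin n) ℝ) with hV
  have hVt : star V = Vᵀ := by ext i j; simp [star_apply]
  have h1 : V * star V = 1 := (Matrix.mem_unitaryGroup_iff).mp (Matrix.IsHermitian.eigenvectorUnitary hA).2
  calc z ⬝ᵥ z = z ⬝ᵥ ((V * star V) *ᵥ z) := by rw [h1, Matrix.one_mulVec]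
    _ = ∑ i, (coeffs hA z i)^2 := by
        rw [← Matrix.mulVec_mulVec, Matrix.dotProduct_mulVec, ← Matrix.mulVec_transpose, ← hVt]
        show (coeffs hA z) ⬝ᵥ (coeffs hA z) = _
        simp [dotProduct, sq]

end spec

section spec2
variable {n : ℕ} {A : Matrix (Fin n) (Fin n) ℝ} (hA : A.IsHermitian)
lemma sortedEigs_eq : sortedEigs A = hA.eigenvalues ∘ Tuple.sort hA.eigenvalues := by
  rw [sortedEigs, dif_pos hA]

lemma quad_le_max (hA : A.IsHermitian) (hn : n - 1 < n) (z : Fin n → ℝ) :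
    z ⬝ᵥ (A *ᵥ z) ≤ sortedEigs A ⟨n - 1, hn⟩ * (z ⬝ᵥ z) := by
  rw [quad_eq hA, normsq_eq hA, Finset.mul_sum]
  apply Finset.sum_le_sum
  intro i _
  apply mul_le_mul_of_nonneg_right _ (sq_nonneg _)
  set σ := Tuple.sort hA.eigenvalues
  have : hA.eigenvalues i = (hA.eigenvalues ∘ σ) (σ.symm i) := by simp
  rw [this, sortedEigs_eq hA]
  have hle : (σ.symm i : Fin n) ≤ ⟨n-1, hn⟩ := by
    rw [Fin.le_def]
    have := (σ.symm i).isLt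
    simp only []
    omega
  exact Tuple.monotone_sort hA.eigenvalues hle

lemma second_le_quad (hA : A.IsHermitian) (hn : 1 < n) (z : Fin n → ℝ)
    (h0 : coeffs hA z (Tuple.sort hA.eigenvalues ⟨0, by omega⟩) = 0) :
    sortedEigs A ⟨1, hn⟩ * (z ⬝ᵥ z) ≤ z ⬝ᵥ (A *ᵥ z) := by
  rw [quad_eq hA, normsq_eq hA, Finset.mul_sum]
  set σ := Tuple.sort hA.eigenvalues
  rw [← Equiv.sum_comp σ (fun i => hA.eigenvalues i * (coeffs hA z i)^2),
      ← Equiv.sum_comp σ (fun i => sortedEigs A ⟨1, hn⟩ * (coeffs hA z i)^2)]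
  apply Finset.sum_le_sum
  intro j _
  by_cases hj : j = ⟨0, by omega⟩
  · subst hj; rw [h0]; simp
  · apply mul_le_mul_of_nonneg_right _ (sq_nonneg _)
    have hle : (⟨1, hn⟩ : Fin n) ≤ j := by
      rw [Fin.le_def]
      rcases Nat.eq_or_lt_of_le (Nat.zero_le j.val) with h | h
      · exact absurd (Fin.ext h.symm) hj
      · exact h
    have := Tuple.monotone_sort hA.eigenvalues hle
    rw [sortedEigs_eq hA]
    exact this

end spec2

noncomputable def eDe {n : ℕ} (G : SimpleGraph (Fin n)) (u₀ u₁ v : Fin n) : ℕ∞ :=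
  G.edist u₀ v ⊓ G.edist u₁ v

section alg
variable {d : ℕ}

lemma s_one_le (hd : 2 ≤ d) : 1 ≤ Real.sqrt ((d:ℝ)-1) := by
  rw [Real.one_le_sqrt]
  have : (2:ℝ) ≤ (d:ℝ) := by exact_mod_cast hd
  linarith

lemma s_mul_self (hd : 2 ≤ d) : Real.sqrt ((d:ℝ)-1) * Real.sqrt ((d:ℝ)-1) = (d:ℝ)-1 := by
  apply Real.mul_self_sqrt
  have : (2:ℝ) ≤ (d:ℝ) := by exact_mod_cast hd
  linarith

lemma keyA (hd : 2 ≤ d) (c : ℝ) :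
    (c - c / Real.sqrt ((d:ℝ)-1))^2 =
      (((d:ℝ) - 2*Real.sqrt ((d:ℝ)-1)) / ((d:ℝ) + 2*Real.sqrt ((d:ℝ)-1))) *
        (c + c / Real.sqrt ((d:ℝ)-1))^2 := by
  set s := Real.sqrt ((d:ℝ)-1) with hs
  have h1 : 1 ≤ s := s_one_le hd
  have h2 : s * s = (d:ℝ)-1 := s_mul_self hd
  have hdd : (d:ℝ) = s*s + 1 := by linarith
  have hs0 : s ≠ 0 := by linarith
  have hden : (d:ℝ) + 2*s ≠ 0 := by
    have : (2:ℝ) ≤ (d:ℝ) := by exact_mod_cast hd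
    positivity
  rw [hdd] at hden ⊢
  field_simp
  ring
end alg

section vecs
variable {n k : ℕ} {G : SimpleGraph (Fin n)} {u₀ u₁ : Fin n}
lemma eDe_fin {v : Fin n} (h : eDe G u₀ u₁ v ≤ (k:ℕ∞)) :
    ∃ m : ℕ, eDe G u₀ u₁ v = (m:ℕ∞) ∧ m ≤ k ∧ (eDe G u₀ u₁ v).toNat = m := by
  have hne : eDe G u₀ u₁ v ≠ ⊤ := by
    intro hc; rw [hc] at h
    exact absurd h (not_le.mpr (ENat.coe_lt_top k))
  refine ⟨(eDe G u₀ u₁ v).toNat, (ENat.coe_toNat hne).symm, ?_, rfl⟩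
  have := (ENat.coe_toNat hne).symm ▸ h
  exact_mod_cast this

end vecs

section graph
variable {n : ℕ} {G : SimpleGraph (Fin n)} {u₀ u₁ : Fin n}


lemma eDe_self_left : eDe G u₀ u₁ u₀ = 0 := by
  simp [eDe, SimpleGraph.edist_self]

lemma eDe_step (hab : G.Adj a b) : eDe G u₀ u₁ b ≤ eDe G u₀ u₁ a + 1 := by
  have h1 : G.edist a b ≤ 1 := by
    simpa using G.edist_le hab.toWalk
  have h0 : G.edist u₀ b ≤ G.edist u₀ a + 1 :=
    le_trans (G.edist_triangle (v := a)) (by exact add_le_add le_rfl h1)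
  have h0' : G.edist u₁ b ≤ G.edist u₁ a + 1 :=
    le_trans (G.edist_triangle (v := a)) (by exact add_le_add le_rfl h1)
  refine le_trans (min_le_min h0 h0') ?_
  rw [eDe]
  exact le_of_eq (min_add_add_right _ _ _)

lemma eDe_eq_zero (h : eDe G u₀ u₁ a = 0) : a = u₀ ∨ a = u₁ := by
  rw [eDe, min_eq_iff] at h
  rcases h with ⟨h, -⟩ | ⟨h, -⟩
  · left; exact (SimpleGraph.edist_eq_zero_iff.mp h).symm
  · right; exact (SimpleGraph.edist_eq_zero_iff.mp h).symm

lemma eDe_down {m : ℕ} (h : eDe G u₀ u₁ a = (m+1 : ℕ)) :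
    ∃ b, G.Adj a b ∧ eDe G u₀ u₁ b ≤ (m : ℕ∞) := by
  rw [eDe, min_eq_iff] at h
  have key : ∀ u : Fin n, G.edist u a = (m+1 : ℕ) → ∃ b, G.Adj a b ∧ G.edist u b ≤ (m : ℕ∞) := by
    intro u hu
    obtain ⟨p, hp⟩ := G.exists_walk_of_edist_eq_coe hu
    have hnil : ¬ p.reverse.Nil := by
      rw [SimpleGraph.Walk.nil_iff_length_eq]
      rw [SimpleGraph.Walk.length_reverse, hp]; omega
    obtain ⟨b, hadj, q, hq⟩ := SimpleGraph.Walk.not_nil_iff.mp hnil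
    refine ⟨b, hadj, ?_⟩
    have hlen : q.length = m := by
      have := congrArg SimpleGraph.Walk.length hq
      rw [SimpleGraph.Walk.length_reverse, hp] at this
      simp at this; omega
    have := G.edist_le q
    rw [hlen] at this
    rwa [G.edist_comm]
  rcases h with ⟨h, -⟩ | ⟨h, -⟩
  · obtain ⟨b, hadj, hb⟩ := key u₀ h
    exact ⟨b, hadj, le_trans (min_le_left _ _) hb⟩
  · obtain ⟨b, hadj, hb⟩ := key u₁ h
    exact ⟨b, hadj, le_trans (min_le_right _ _) hb⟩

end graph

section count
variable {n d : ℕ} {G : SimpleGraph (Fin n)} {u₀ u₁ : Fin n}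

lemma eDe_nbr_count (hreg : G.IsRegularOfDegree d) (hadj : G.Adj u₀ u₁)
    {a : Fin n} {ℓ : ℕ} (h : eDe G u₀ u₁ a = (ℓ : ℕ∞)) :
    ((G.neighborFinset a).filter (fun b => ¬ eDe G u₀ u₁ b ≤ (ℓ : ℕ∞))).card ≤ d - 1 := by
  obtain ⟨b₀, hb₀adj, hb₀⟩ : ∃ b₀, G.Adj a b₀ ∧ eDe G u₀ u₁ b₀ ≤ (ℓ : ℕ∞) := by
    cases ℓ with
    | zero =>
      rcases eDe_eq_zero h with rfl | rfl
      · exact ⟨u₁, hadj, by simp [eDe, SimpleGraph.edist_self]⟩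
      · exact ⟨u₀, hadj.symm, by simp [eDe, SimpleGraph.edist_self]⟩
    | succ m =>
      obtain ⟨b, hb, hle⟩ := eDe_down h
      exact ⟨b, hb, le_trans hle (by exact_mod_cast Nat.cast_le.mpr (Nat.le_succ m))⟩
  have hlt : ((G.neighborFinset a).filter (fun b => ¬ eDe G u₀ u₁ b ≤ (ℓ : ℕ∞))).card
      < (G.neighborFinset a).card := by
    apply Finset.card_lt_card
    constructor
    · exact Finset.filter_subset _ _
    · intro hsub
      have hb₀mem : b₀ ∈ G.neighborFinset a := by
        rw [SimpleGraph.mem_neighborFinset]; exact hb₀adj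
      have := hsub hb₀mem
      rw [Finset.mem_filter] at this
      exact this.2 hb₀
  have hdeg : (G.neighborFinset a).card = d := hreg a
  omega

lemma eDe_lvl_count (hreg : G.IsRegularOfDegree d) (hadj : G.Adj u₀ u₁) (ℓ : ℕ) :
    (Finset.univ.filter (fun v => eDe G u₀ u₁ v = ((ℓ+1 : ℕ) : ℕ∞))).card
      ≤ (d-1) * (Finset.univ.filter (fun v => eDe G u₀ u₁ v = (ℓ : ℕ∞))).card := by
  set L := Finset.univ.filter (fun v => eDe G u₀ u₁ v = (ℓ : ℕ∞)) with hL
  have hsub : (Finset.univ.filter (fun v => eDe G u₀ u₁ v = ((ℓ+1 : ℕ) : ℕ∞)))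
      ⊆ L.biUnion (fun a => (G.neighborFinset a).filter (fun b => ¬ eDe G u₀ u₁ b ≤ (ℓ : ℕ∞))) := by
    intro b hb
    rw [Finset.mem_filter] at hb
    obtain ⟨a, haadj, hale⟩ := eDe_down hb.2
    have hage : (ℓ : ℕ∞) ≤ eDe G u₀ u₁ a := by
      have h1 := eDe_step (u₀ := u₀) (u₁ := u₁) haadj.symm
      rw [hb.2] at h1
      have h2 : ((ℓ:ℕ∞) + 1) ≤ eDe G u₀ u₁ a + 1 := by
        rw [show ((ℓ+1:ℕ):ℕ∞) = (ℓ:ℕ∞)+1 from by push_cast; rfl] at h1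
        exact h1
      exact (WithTop.add_le_add_iff_right (by simp : (1:ℕ∞) ≠ ⊤)).mp h2
    have haeq : eDe G u₀ u₁ a = (ℓ : ℕ∞) := le_antisymm hale hage
    rw [Finset.mem_biUnion]
    refine ⟨a, by rw [hL, Finset.mem_filter]; exact ⟨Finset.mem_univ _, haeq⟩, ?_⟩
    rw [Finset.mem_filter, SimpleGraph.mem_neighborFinset]
    refine ⟨haadj.symm, ?_⟩
    rw [hb.2]
    intro hcon
    have : ℓ + 1 ≤ ℓ := by exact_mod_cast hcon
    omega
  apply le_trans (Finset.card_le_card hsub)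
  apply le_trans Finset.card_biUnion_le
  have hsum : ∑ a ∈ L, ((G.neighborFinset a).filter (fun b => ¬ eDe G u₀ u₁ b ≤ (ℓ : ℕ∞))).card
      ≤ ∑ a ∈ L, (d-1) := by
    apply Finset.sum_le_sum
    intro a ha
    rw [hL, Finset.mem_filter] at ha
    exact eDe_nbr_count hreg hadj ha.2
  simpa [Finset.sum_const, smul_eq_mul, mul_comm] using hsum
end count

noncomputable def xvec {n : ℕ} (G : SimpleGraph (Fin n)) (u₀ u₁ : Fin n) (d k : ℕ) : Fin n → ℝ :=
  fun v => if eDe G u₀ u₁ v ≤ (k:ℕ∞) then ((Real.sqrt ((d:ℝ)-1)) ^ (eDe G u₀ u₁ v).toNat)⁻¹ else 0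
noncomputable def yvec {n : ℕ} (G : SimpleGraph (Fin n)) (u₀ u₁ : Fin n) (d k : ℕ) : Fin n → ℝ :=
  fun v => if eDe G u₀ u₁ v ≤ (k:ℕ∞) then
    (-1 : ℝ)^((eDe G u₀ u₁ v).toNat) * ((Real.sqrt ((d:ℝ)-1)) ^ (eDe G u₀ u₁ v).toNat)⁻¹ else 0
noncomputable def bnd {n : ℕ} (G : SimpleGraph (Fin n)) (u₀ u₁ : Fin n) (d k : ℕ) : Fin n → Fin n → ℝ :=
  fun a b => if eDe G u₀ u₁ a = (k:ℕ∞) ∧ ¬ eDe G u₀ u₁ b ≤ (k:ℕ∞) then (((d:ℝ)-1)^k)⁻¹ else 0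

section pointA
variable {n d k : ℕ} {G : SimpleGraph (Fin n)} {u₀ u₁ : Fin n}

lemma sq_inv_pow (hd : 2 ≤ d) (m : ℕ) :
    ((Real.sqrt ((d:ℝ)-1) ^ m)⁻¹)^2 = (((d:ℝ)-1)^m)⁻¹ := by
  rw [sq, ← mul_inv, ← mul_pow, s_mul_self hd]

lemma sign_sq (p : ℕ) (cp cq : ℝ) :
    ((-1:ℝ)^p * cp - (-1:ℝ)^(p+1) * cq)^2 = (cp + cq)^2 := by
  have h1 : ((-1:ℝ)^p)^2 = 1 := by
    rw [← pow_mul, mul_comm, pow_mul]; norm_num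
  calc ((-1:ℝ)^p * cp - (-1:ℝ)^(p+1) * cq)^2 = ((-1:ℝ)^p)^2 * (cp + cq)^2 := by
        rw [pow_succ]; ring
    _ = (cp + cq)^2 := by rw [h1, one_mul]

lemma step_val (hd : 2 ≤ d) (p : ℕ) :
    ((Real.sqrt ((d:ℝ)-1) ^ p)⁻¹ - (Real.sqrt ((d:ℝ)-1) ^ (p+1))⁻¹)^2 =
      (((d:ℝ) - 2*Real.sqrt ((d:ℝ)-1)) / ((d:ℝ) + 2*Real.sqrt ((d:ℝ)-1))) *
        ((Real.sqrt ((d:ℝ)-1) ^ p)⁻¹ + (Real.sqrt ((d:ℝ)-1) ^ (p+1))⁻¹)^2 := by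
  have hs0 : Real.sqrt ((d:ℝ)-1) ≠ 0 := by
    have := s_one_le hd; linarith
  have hcq : (Real.sqrt ((d:ℝ)-1) ^ (p+1))⁻¹
      = (Real.sqrt ((d:ℝ)-1) ^ p)⁻¹ / Real.sqrt ((d:ℝ)-1) := by
    rw [pow_succ, mul_inv, div_eq_mul_inv]
  rw [hcq]
  exact keyA hd _

lemma pointA (hd : 2 ≤ d) (hk : 1 ≤ k) {a b : Fin n} (hab : G.Adj a b) :
    (xvec G u₀ u₁ d k a - xvec G u₀ u₁ d k b)^2 ≤
      (((d:ℝ) - 2*Real.sqrt ((d:ℝ)-1)) / ((d:ℝ) + 2*Real.sqrt ((d:ℝ)-1))) *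
          (yvec G u₀ u₁ d k a - yvec G u₀ u₁ d k b)^2
        + (1 - ((d:ℝ) - 2*Real.sqrt ((d:ℝ)-1)) / ((d:ℝ) + 2*Real.sqrt ((d:ℝ)-1))) *
          (bnd G u₀ u₁ d k a b + bnd G u₀ u₁ d k b a) := by
  set s := Real.sqrt ((d:ℝ)-1) with hsdef
  set Ac := ((d:ℝ) - 2*s) / ((d:ℝ) + 2*s) with hAcdef
  have hs1 : 1 ≤ s := s_one_le hd
  have hss : s * s = (d:ℝ)-1 := s_mul_self hd
  have hdpos : (0:ℝ) < (d:ℝ) + 2*s := by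
    have : (2:ℝ) ≤ (d:ℝ) := by exact_mod_cast hd
    linarith
  have hAc0 : 0 ≤ Ac := by
    apply div_nonneg _ (le_of_lt hdpos)
    nlinarith
  have hAc1 : Ac ≤ 1 := by
    rw [hAcdef, div_le_one hdpos]; linarith
  have hstep1 := eDe_step (u₀ := u₀) (u₁ := u₁) hab
  have hstep2 := eDe_step (u₀ := u₀) (u₁ := u₁) hab.symm
  by_cases ha : eDe G u₀ u₁ a ≤ (k:ℕ∞) <;> by_cases hb : eDe G u₀ u₁ b ≤ (k:ℕ∞)
  · -- both within distance k
    obtain ⟨p, hpa, hpk, hpt⟩ := eDe_fin ha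
    obtain ⟨q, hqa, hqk, hqt⟩ := eDe_fin hb
    have hxa : xvec G u₀ u₁ d k a = (s^p)⁻¹ := by rw [xvec, if_pos ha, hpt]
    have hxb : xvec G u₀ u₁ d k b = (s^q)⁻¹ := by rw [xvec, if_pos hb, hqt]
    have hya : yvec G u₀ u₁ d k a = (-1:ℝ)^p * (s^p)⁻¹ := by rw [yvec, if_pos ha, hpt]
    have hyb : yvec G u₀ u₁ d k b = (-1:ℝ)^q * (s^q)⁻¹ := by rw [yvec, if_pos hb, hqt]
    have hbd1 : bnd G u₀ u₁ d k a b = 0 := by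
      rw [bnd, if_neg]; rintro ⟨-, h2⟩; exact h2 hb
    have hbd2 : bnd G u₀ u₁ d k b a = 0 := by
      rw [bnd, if_neg]; rintro ⟨-, h2⟩; exact h2 ha
    have hqp : q ≤ p + 1 := by
      rw [hpa, hqa] at hstep1
      exact_mod_cast hstep1
    have hpq : p ≤ q + 1 := by
      rw [hpa, hqa] at hstep2
      exact_mod_cast hstep2
    rw [hxa, hxb, hya, hyb, hbd1, hbd2]
    rcases Nat.lt_trichotomy p q with h | rfl | h
    · have hq1 : q = p + 1 := by omega
      subst hq1
      rw [sign_sq p ((s^p)⁻¹) ((s^(p+1))⁻¹), step_val hd p]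
      simp
      exact le_rfl
    · simp
    · have hp1 : p = q + 1 := by omega
      subst hp1
      have hsym : ((s^(q+1))⁻¹ - (s^q)⁻¹)^2 = ((s^q)⁻¹ - (s^(q+1))⁻¹)^2 := by ring
      have hsym2 : ((-1:ℝ)^(q+1) * (s^(q+1))⁻¹ - (-1:ℝ)^q * (s^q)⁻¹)^2
          = ((-1:ℝ)^q * (s^q)⁻¹ - (-1:ℝ)^(q+1) * (s^(q+1))⁻¹)^2 := by ring
      rw [hsym, hsym2, sign_sq q ((s^q)⁻¹) ((s^(q+1))⁻¹), step_val hd q]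
      simp
      exact le_rfl
  · -- a within, b outside : boundary edge
    obtain ⟨p, hpa, hpk, hpt⟩ := eDe_fin ha
    have hpk2 : p = k := by
      by_contra hne
      apply hb
      rw [hpa] at hstep1
      refine le_trans hstep1 ?_
      have : p + 1 ≤ k := by omega
      exact_mod_cast Nat.cast_le.mpr this
    have hpa' : eDe G u₀ u₁ a = (k:ℕ∞) := by rw [hpa, hpk2]
    have hpt' : (eDe G u₀ u₁ a).toNat = k := by rw [hpt, hpk2]
    have hxa : xvec G u₀ u₁ d k a = (s^k)⁻¹ := by rw [xvec, if_pos ha, hpt']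
    have hxb : xvec G u₀ u₁ d k b = 0 := by rw [xvec, if_neg hb]
    have hya : yvec G u₀ u₁ d k a = (-1:ℝ)^k * (s^k)⁻¹ := by rw [yvec, if_pos ha, hpt']
    have hyb : yvec G u₀ u₁ d k b = 0 := by rw [yvec, if_neg hb]
    have hbd1 : bnd G u₀ u₁ d k a b = (((d:ℝ)-1)^k)⁻¹ := by
      rw [bnd, if_pos ⟨hpa', hb⟩]
    have hbd2 : bnd G u₀ u₁ d k b a = 0 := by
      rw [bnd, if_neg]; rintro ⟨h1, -⟩; exact hb (le_of_eq h1)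
    rw [hxa, hxb, hya, hyb, hbd1, hbd2]
    have hsq : ((s^k)⁻¹)^2 = (((d:ℝ)-1)^k)⁻¹ := sq_inv_pow hd k
    have hysq : ((-1:ℝ)^k * (s^k)⁻¹ - 0)^2 = ((s^k)⁻¹)^2 := by
      have h1 : ((-1:ℝ)^k)^2 = 1 := by rw [← pow_mul, mul_comm, pow_mul]; norm_num
      calc ((-1:ℝ)^k * (s^k)⁻¹ - 0)^2 = ((-1:ℝ)^k)^2 * ((s^k)⁻¹)^2 := by ring
        _ = ((s^k)⁻¹)^2 := by rw [h1, one_mul]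
    rw [hysq, ← hsq]
    ring_nf
    linarith
  · -- b within, a outside
    obtain ⟨q, hqa, hqk, hqt⟩ := eDe_fin hb
    have hqk2 : q = k := by
      by_contra hne
      apply ha
      rw [hqa] at hstep2
      refine le_trans hstep2 ?_
      have : q + 1 ≤ k := by omega
      exact_mod_cast Nat.cast_le.mpr this
    have hqa' : eDe G u₀ u₁ b = (k:ℕ∞) := by rw [hqa, hqk2]
    have hqt' : (eDe G u₀ u₁ b).toNat = k := by rw [hqt, hqk2]
    have hxa : xvec G u₀ u₁ d k a = 0 := by rw [xvec, if_neg ha]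
    have hxb : xvec G u₀ u₁ d k b = (s^k)⁻¹ := by rw [xvec, if_pos hb, hqt']
    have hya : yvec G u₀ u₁ d k a = 0 := by rw [yvec, if_neg ha]
    have hyb : yvec G u₀ u₁ d k b = (-1:ℝ)^k * (s^k)⁻¹ := by rw [yvec, if_pos hb, hqt']
    have hbd1 : bnd G u₀ u₁ d k a b = 0 := by
      rw [bnd, if_neg]; rintro ⟨h1, -⟩; exact ha (le_of_eq h1)
    have hbd2 : bnd G u₀ u₁ d k b a = (((d:ℝ)-1)^k)⁻¹ := by
      rw [bnd, if_pos ⟨hqa', ha⟩]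
    rw [hxa, hxb, hya, hyb, hbd1, hbd2]
    have hsq : ((s^k)⁻¹)^2 = (((d:ℝ)-1)^k)⁻¹ := sq_inv_pow hd k
    have hysq : ((0:ℝ) - (-1:ℝ)^k * (s^k)⁻¹)^2 = ((s^k)⁻¹)^2 := by
      have h1 : ((-1:ℝ)^k)^2 = 1 := by rw [← pow_mul, mul_comm, pow_mul]; norm_num
      calc ((0:ℝ) - (-1:ℝ)^k * (s^k)⁻¹)^2 = ((-1:ℝ)^k)^2 * ((s^k)⁻¹)^2 := by ring
        _ = ((s^k)⁻¹)^2 := by rw [h1, one_mul]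
    rw [hysq, ← hsq]
    ring_nf
    linarith
  · -- both outside
    have hxa : xvec G u₀ u₁ d k a = 0 := by rw [xvec, if_neg ha]
    have hxb : xvec G u₀ u₁ d k b = 0 := by rw [xvec, if_neg hb]
    have hya : yvec G u₀ u₁ d k a = 0 := by rw [yvec, if_neg ha]
    have hyb : yvec G u₀ u₁ d k b = 0 := by rw [yvec, if_neg hb]
    have hbd1 : bnd G u₀ u₁ d k a b = 0 := by
      rw [bnd, if_neg]; rintro ⟨h1, -⟩; exact ha (le_of_eq h1)
    have hbd2 : bnd G u₀ u₁ d k b a = 0 := by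
      rw [bnd, if_neg]; rintro ⟨h1, -⟩; exact hb (le_of_eq h1)
    rw [hxa, hxb, hya, hyb, hbd1, hbd2]
    simp
end pointA

section sums
variable {n d k : ℕ} {G : SimpleGraph (Fin n)} {u₀ u₁ : Fin n}

lemma Qbridge (z : Fin n → ℝ) :
    z ⬝ᵥ ((G.lapMatrix ℝ) *ᵥ z) = (∑ i, ∑ j, if G.Adj i j then (z i - z j)^2 else 0)/2 := by
  rw [← Matrix.toLinearMap₂'_apply', SimpleGraph.lapMatrix_toLinearMap₂']

lemma yy_eq_xx : yvec G u₀ u₁ d k ⬝ᵥ yvec G u₀ u₁ d k = xvec G u₀ u₁ d k ⬝ᵥ xvec G u₀ u₁ d k := by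
  unfold dotProduct
  apply Finset.sum_congr rfl
  intro v _
  by_cases h : eDe G u₀ u₁ v ≤ (k:ℕ∞)
  · rw [xvec, yvec, if_pos h, if_pos h]
    have h1 : ((-1:ℝ)^((eDe G u₀ u₁ v).toNat))^2 = 1 := by
      rw [← pow_mul, mul_comm, pow_mul]; norm_num
    nlinarith [h1]
  · rw [xvec, yvec, if_neg h, if_neg h]

lemma xvec_u₀ : xvec G u₀ u₁ d k u₀ = 1 := by
  have h0 : eDe G u₀ u₁ u₀ = 0 := by
    simp [eDe, SimpleGraph.edist_self]
  rw [xvec, if_pos (by rw [h0]; exact zero_le), h0]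
  simp

lemma xvec_supp {v : Fin n} (h : xvec G u₀ u₁ d k v ≠ 0) : eDe G u₀ u₁ v ≤ (k:ℕ∞) := by
  by_contra hc
  exact h (by rw [xvec, if_neg hc])

lemma xx_pos : 0 < xvec G u₀ u₁ d k ⬝ᵥ xvec G u₀ u₁ d k := by
  unfold dotProduct
  have h1 : xvec G u₀ u₁ d k u₀ * xvec G u₀ u₁ d k u₀ = 1 := by rw [xvec_u₀]; ring
  have : ∀ v ∈ Finset.univ, (0:ℝ) ≤ xvec G u₀ u₁ d k v * xvec G u₀ u₁ d k v :=
    fun v _ => mul_self_nonneg _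
  calc (0:ℝ) < 1 := one_pos
    _ = xvec G u₀ u₁ d k u₀ * xvec G u₀ u₁ d k u₀ := h1.symm
    _ ≤ ∑ v, xvec G u₀ u₁ d k v * xvec G u₀ u₁ d k v :=
        Finset.single_le_sum this (Finset.mem_univ u₀)
end sums

section sums2
variable {n d k : ℕ} {G : SimpleGraph (Fin n)} {u₀ u₁ : Fin n}

noncomputable def lvlCard (G : SimpleGraph (Fin n)) (u₀ u₁ : Fin n) (ℓ : ℕ) : ℕ :=
  (Finset.univ.filter (fun v => eDe G u₀ u₁ v = (ℓ : ℕ∞))).card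

lemma bnd_sum (hd : 2 ≤ d) (hreg : G.IsRegularOfDegree d) (he : G.Adj u₀ u₁) :
    ∑ a, ∑ b, (if G.Adj a b then bnd G u₀ u₁ d k a b else 0) ≤
      ((d:ℝ)-1) * ((lvlCard G u₀ u₁ k : ℝ) * (((d:ℝ)-1)^k)⁻¹) := by
  have htknn : (0:ℝ) ≤ (((d:ℝ)-1)^k)⁻¹ := by
    have h2d : (2:ℝ) ≤ (d:ℝ) := by exact_mod_cast hd
    have h1d : (0:ℝ) ≤ (d:ℝ) - 1 := by linarith
    positivity
  have hinner : ∀ a : Fin n, ∑ b, (if G.Adj a b then bnd G u₀ u₁ d k a b else 0)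
      ≤ (if eDe G u₀ u₁ a = (k:ℕ∞) then ((d:ℝ)-1) * (((d:ℝ)-1)^k)⁻¹ else 0) := by
    intro a
    by_cases ha : eDe G u₀ u₁ a = (k:ℕ∞)
    · rw [if_pos ha]
      have hpt : ∀ b : Fin n, (if G.Adj a b then bnd G u₀ u₁ d k a b else 0)
          = (if (G.Adj a b ∧ ¬ eDe G u₀ u₁ b ≤ (k:ℕ∞)) then (((d:ℝ)-1)^k)⁻¹ else 0) := by
        intro b
        by_cases hab : G.Adj a b
        · rw [if_pos hab, bnd]
          by_cases hbb : ¬ eDe G u₀ u₁ b ≤ (k:ℕ∞)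
          · rw [if_pos ⟨ha, hbb⟩, if_pos ⟨hab, hbb⟩]
          · rw [if_neg (by tauto), if_neg (by tauto)]
        · rw [if_neg hab, if_neg (by tauto)]
      rw [Finset.sum_congr rfl (fun b _ => hpt b)]
      rw [← Finset.sum_filter, Finset.sum_const, nsmul_eq_mul]
      have hfeq : Finset.univ.filter (fun b => G.Adj a b ∧ ¬ eDe G u₀ u₁ b ≤ (k:ℕ∞))
          = (G.neighborFinset a).filter (fun b => ¬ eDe G u₀ u₁ b ≤ (k:ℕ∞)) := by
        ext b
        simp [SimpleGraph.mem_neighborFinset, and_assoc]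
      rw [hfeq]
      apply mul_le_mul_of_nonneg_right _ htknn
      have hcard := eDe_nbr_count hreg he ha
      have hd1 : ((d - 1 : ℕ) : ℝ) = (d:ℝ) - 1 := by
        have : 1 ≤ d := by omega
        push_cast [Nat.cast_sub this]
        ring
      calc (((G.neighborFinset a).filter (fun b => ¬ eDe G u₀ u₁ b ≤ (k:ℕ∞))).card : ℝ)
          ≤ ((d - 1 : ℕ) : ℝ) := by exact_mod_cast hcard
        _ = (d:ℝ) - 1 := hd1
    · rw [if_neg ha]
      apply le_of_eq
      apply Finset.sum_eq_zero
      intro b _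
      by_cases hab : G.Adj a b
      · rw [if_pos hab, bnd, if_neg (by tauto)]
      · rw [if_neg hab]
  calc ∑ a, ∑ b, (if G.Adj a b then bnd G u₀ u₁ d k a b else 0)
      ≤ ∑ a, (if eDe G u₀ u₁ a = (k:ℕ∞) then ((d:ℝ)-1) * (((d:ℝ)-1)^k)⁻¹ else 0) :=
        Finset.sum_le_sum (fun a _ => hinner a)
    _ = ((lvlCard G u₀ u₁ k : ℝ)) * (((d:ℝ)-1) * (((d:ℝ)-1)^k)⁻¹) := by
        rw [← Finset.sum_filter, Finset.sum_const, nsmul_eq_mul, lvlCard]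
    _ = ((d:ℝ)-1) * ((lvlCard G u₀ u₁ k : ℝ) * (((d:ℝ)-1)^k)⁻¹) := by ring

lemma bnd_sum_swap :
    ∑ a, ∑ b, (if G.Adj a b then bnd G u₀ u₁ d k b a else 0)
      = ∑ a, ∑ b, (if G.Adj a b then bnd G u₀ u₁ d k a b else 0) := by
  rw [Finset.sum_comm]
  apply Finset.sum_congr rfl
  intro a _
  apply Finset.sum_congr rfl
  intro b _
  rw [if_congr (G.adj_comm b a) rfl rfl]
end sums2

section sums3
variable {n d k : ℕ} {G : SimpleGraph (Fin n)} {u₀ u₁ : Fin n}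

lemma wmono (hd : 2 ≤ d) (hreg : G.IsRegularOfDegree d) (he : G.Adj u₀ u₁) :
    ∀ i j : ℕ, i ≤ j →
      (lvlCard G u₀ u₁ j : ℝ) * (((d:ℝ)-1)^j)⁻¹ ≤ (lvlCard G u₀ u₁ i : ℝ) * (((d:ℝ)-1)^i)⁻¹ := by
  have h2d : (2:ℝ) ≤ (d:ℝ) := by exact_mod_cast hd
  have hd1pos : (0:ℝ) < (d:ℝ) - 1 := by linarith
  intro i j hij
  induction j, hij using Nat.le_induction with
  | base => exact le_refl _
  | succ j hij ih =>
    refine le_trans ?_ ih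
    have hcount := eDe_lvl_count (u₀ := u₀) (u₁ := u₁) hreg he j
    have hcast : (lvlCard G u₀ u₁ (j+1) : ℝ) ≤ ((d:ℝ)-1) * (lvlCard G u₀ u₁ j : ℝ) := by
      have hd1 : ((d - 1 : ℕ) : ℝ) = (d:ℝ) - 1 := by
        have : 1 ≤ d := by omega
        push_cast [Nat.cast_sub this]; ring
      rw [← hd1]
      exact_mod_cast hcount
    have hpow : (((d:ℝ)-1)^(j+1))⁻¹ = (((d:ℝ)-1)^j)⁻¹ * ((d:ℝ)-1)⁻¹ := by
      rw [pow_succ, mul_inv]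
    rw [hpow]
    have htj : (0:ℝ) ≤ (((d:ℝ)-1)^j)⁻¹ := by positivity
    calc (lvlCard G u₀ u₁ (j+1) : ℝ) * ((((d:ℝ)-1)^j)⁻¹ * ((d:ℝ)-1)⁻¹)
        ≤ (((d:ℝ)-1) * (lvlCard G u₀ u₁ j : ℝ)) * ((((d:ℝ)-1)^j)⁻¹ * ((d:ℝ)-1)⁻¹) := by
          apply mul_le_mul_of_nonneg_right hcast
          positivity
      _ = (lvlCard G u₀ u₁ j : ℝ) * (((d:ℝ)-1)^j)⁻¹ * (((d:ℝ)-1) * ((d:ℝ)-1)⁻¹) := by ring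
      _ = (lvlCard G u₀ u₁ j : ℝ) * (((d:ℝ)-1)^j)⁻¹ := by
          rw [mul_inv_cancel₀ (ne_of_gt hd1pos), mul_one]

lemma xx_fiber (hd : 2 ≤ d) :
    xvec G u₀ u₁ d k ⬝ᵥ xvec G u₀ u₁ d k
      = ∑ ℓ ∈ Finset.range (k+1), (lvlCard G u₀ u₁ ℓ : ℝ) * (((d:ℝ)-1)^ℓ)⁻¹ := by
  unfold dotProduct
  have hpt : ∀ v : Fin n, xvec G u₀ u₁ d k v * xvec G u₀ u₁ d k v
      = (if eDe G u₀ u₁ v ≤ (k:ℕ∞) then (((d:ℝ)-1)^((eDe G u₀ u₁ v).toNat))⁻¹ else 0) := by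
    intro v
    by_cases h : eDe G u₀ u₁ v ≤ (k:ℕ∞)
    · rw [xvec, if_pos h, if_pos h, ← sq_inv_pow hd, sq]
    · rw [xvec, if_neg h, if_neg h, mul_zero]
  rw [Finset.sum_congr rfl (fun v _ => hpt v), ← Finset.sum_filter]
  set U := Finset.univ.filter (fun v => eDe G u₀ u₁ v ≤ (k:ℕ∞)) with hU
  have hmap : ∀ v ∈ U, (eDe G u₀ u₁ v).toNat ∈ Finset.range (k+1) := by
    intro v hv
    rw [hU, Finset.mem_filter] at hv
    obtain ⟨m, -, hm2, hm3⟩ := eDe_fin hv.2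
    rw [Finset.mem_range, hm3]; omega
  rw [← Finset.sum_fiberwise_of_maps_to hmap]
  apply Finset.sum_congr rfl
  intro ℓ hℓ
  rw [Finset.mem_range] at hℓ
  have hfib : U.filter (fun v => (eDe G u₀ u₁ v).toNat = ℓ)
      = Finset.univ.filter (fun v => eDe G u₀ u₁ v = (ℓ:ℕ∞)) := by
    ext v
    rw [Finset.mem_filter, hU, Finset.mem_filter, Finset.mem_filter]
    constructor
    · rintro ⟨⟨-, h1⟩, h2⟩
      obtain ⟨m, hm1, -, hm3⟩ := eDe_fin h1
      refine ⟨Finset.mem_univ _, ?_⟩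
      rw [hm1]; rw [hm3] at h2; rw [h2]
    · rintro ⟨-, h1⟩
      have hle : eDe G u₀ u₁ v ≤ (k:ℕ∞) := by
        rw [h1]; exact_mod_cast Nat.cast_le.mpr (by omega : ℓ ≤ k)
      refine ⟨⟨Finset.mem_univ _, hle⟩, ?_⟩
      rw [h1]; simp
  have hconst : ∀ v ∈ U.filter (fun v => (eDe G u₀ u₁ v).toNat = ℓ),
      (((d:ℝ)-1)^((eDe G u₀ u₁ v).toNat))⁻¹ = (((d:ℝ)-1)^ℓ)⁻¹ := by
    intro v hv
    rw [Finset.mem_filter] at hv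
    rw [hv.2]
  rw [Finset.sum_congr rfl hconst, Finset.sum_const, nsmul_eq_mul, hfib, lvlCard]

lemma Wk_bound (hd : 2 ≤ d) (hreg : G.IsRegularOfDegree d) (he : G.Adj u₀ u₁) :
    ((k:ℝ)+1) * ((lvlCard G u₀ u₁ k : ℝ) * (((d:ℝ)-1)^k)⁻¹)
      ≤ xvec G u₀ u₁ d k ⬝ᵥ xvec G u₀ u₁ d k := by
  rw [xx_fiber hd]
  have : ∀ ℓ ∈ Finset.range (k+1),
      (lvlCard G u₀ u₁ k : ℝ) * (((d:ℝ)-1)^k)⁻¹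
        ≤ (lvlCard G u₀ u₁ ℓ : ℝ) * (((d:ℝ)-1)^ℓ)⁻¹ := by
    intro ℓ hℓ
    rw [Finset.mem_range] at hℓ
    exact wmono hd hreg he ℓ k (by omega)
  calc ((k:ℝ)+1) * ((lvlCard G u₀ u₁ k : ℝ) * (((d:ℝ)-1)^k)⁻¹)
      = ∑ _ℓ ∈ Finset.range (k+1), (lvlCard G u₀ u₁ k : ℝ) * (((d:ℝ)-1)^k)⁻¹ := by
        rw [Finset.sum_const, Finset.card_range, nsmul_eq_mul]; push_cast; ring
    _ ≤ ∑ ℓ ∈ Finset.range (k+1), (lvlCard G u₀ u₁ ℓ : ℝ) * (((d:ℝ)-1)^ℓ)⁻¹ :=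
        Finset.sum_le_sum this
end sums3

section edgeest
variable {n d k : ℕ} {G : SimpleGraph (Fin n)} {u₀ u₁ : Fin n}

lemma edge_est (hd : 2 ≤ d) (hk : 1 ≤ k) (hreg : G.IsRegularOfDegree d) (he : G.Adj u₀ u₁)
    (hn1 : n - 1 < n) :
    xvec G u₀ u₁ d k ⬝ᵥ ((G.lapMatrix ℝ) *ᵥ xvec G u₀ u₁ d k) ≤
      ((((d:ℝ) - 2*Real.sqrt ((d:ℝ)-1)) / ((d:ℝ) + 2*Real.sqrt ((d:ℝ)-1))) * lapEig G n
        + (1 - ((d:ℝ) - 2*Real.sqrt ((d:ℝ)-1)) / ((d:ℝ) + 2*Real.sqrt ((d:ℝ)-1)))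
          * ((d:ℝ)-1) / ((k:ℝ)+1))
        * (xvec G u₀ u₁ d k ⬝ᵥ xvec G u₀ u₁ d k) := by
  set s := Real.sqrt ((d:ℝ)-1) with hsdef
  set Ac := ((d:ℝ) - 2*s) / ((d:ℝ) + 2*s) with hAcdef
  set x := xvec G u₀ u₁ d k with hxdef
  set y := yvec G u₀ u₁ d k with hydef
  set W := x ⬝ᵥ x with hWdef
  set tk := (((d:ℝ)-1)^k)⁻¹ with htkdef
  set Nk := (lvlCard G u₀ u₁ k : ℝ) with hNkdef
  have hs1 : 1 ≤ s := s_one_le hd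
  have h2d : (2:ℝ) ≤ (d:ℝ) := by exact_mod_cast hd
  have hss : s * s = (d:ℝ)-1 := s_mul_self hd
  have hdpos : (0:ℝ) < (d:ℝ) + 2*s := by linarith
  have hAc0 : 0 ≤ Ac := by
    apply div_nonneg _ (le_of_lt hdpos); nlinarith
  have hAc1 : Ac ≤ 1 := by rw [hAcdef, div_le_one hdpos]; linarith
  -- the lap quadratic forms
  have hQx := Qbridge (G := G) x
  have hQy := Qbridge (G := G) y
  -- sum inequality
  have hptall : ∀ a b : Fin n, (if G.Adj a b then (x a - x b)^2 else 0)
      ≤ Ac * (if G.Adj a b then (y a - y b)^2 else 0)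
        + (1-Ac) * (if G.Adj a b then bnd G u₀ u₁ d k a b else 0)
        + (1-Ac) * (if G.Adj a b then bnd G u₀ u₁ d k b a else 0) := by
    intro a b
    by_cases hab : G.Adj a b
    · rw [if_pos hab, if_pos hab, if_pos hab, if_pos hab]
      have := pointA (u₀ := u₀) (u₁ := u₁) hd hk hab
      rw [← hsdef, ← hAcdef, ← hxdef, ← hydef] at this
      linarith
    · rw [if_neg hab, if_neg hab, if_neg hab, if_neg hab]
      simp
  have hSS : ∑ a, ∑ b, (if G.Adj a b then (x a - x b)^2 else 0)
      ≤ Ac * (∑ a, ∑ b, (if G.Adj a b then (y a - y b)^2 else 0))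
        + (1-Ac) * (2 * (((d:ℝ)-1) * (Nk * tk))) := by
    have hsum1 : ∑ a, ∑ b, (if G.Adj a b then (x a - x b)^2 else 0)
        ≤ ∑ a, ∑ b, (Ac * (if G.Adj a b then (y a - y b)^2 else 0)
          + (1-Ac) * (if G.Adj a b then bnd G u₀ u₁ d k a b else 0)
          + (1-Ac) * (if G.Adj a b then bnd G u₀ u₁ d k b a else 0)) := by
      apply Finset.sum_le_sum; intro a _
      apply Finset.sum_le_sum; intro b _
      exact hptall a b
    refine le_trans hsum1 ?_
    rw [show (∑ a, ∑ b, (Ac * (if G.Adj a b then (y a - y b)^2 else 0)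
          + (1-Ac) * (if G.Adj a b then bnd G u₀ u₁ d k a b else 0)
          + (1-Ac) * (if G.Adj a b then bnd G u₀ u₁ d k b a else 0)))
        = Ac * (∑ a, ∑ b, (if G.Adj a b then (y a - y b)^2 else 0))
          + (1-Ac) * (∑ a, ∑ b, (if G.Adj a b then bnd G u₀ u₁ d k a b else 0))
          + (1-Ac) * (∑ a, ∑ b, (if G.Adj a b then bnd G u₀ u₁ d k b a else 0)) from by
      rw [Finset.mul_sum, Finset.mul_sum, Finset.mul_sum, ← Finset.sum_add_distrib,
        ← Finset.sum_add_distrib]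
      apply Finset.sum_congr rfl; intro a _
      rw [Finset.mul_sum, Finset.mul_sum, Finset.mul_sum, ← Finset.sum_add_distrib,
        ← Finset.sum_add_distrib]]
    rw [bnd_sum_swap]
    have hb := bnd_sum (u₀ := u₀) (u₁ := u₁) (k := k) hd hreg he
    rw [← hNkdef, ← htkdef] at hb
    have h1Ac : (0:ℝ) ≤ 1 - Ac := by linarith
    nlinarith [mul_le_mul_of_nonneg_left hb h1Ac]
  -- spectral bound for y
  have hherm : (G.lapMatrix ℝ).IsHermitian := (SimpleGraph.posSemidef_lapMatrix ℝ G).1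
  have hlapn : lapEig G n = sortedEigs (G.lapMatrix ℝ) ⟨n-1, hn1⟩ := by
    rw [lapEig, dif_pos hn1]
  have hyy : y ⬝ᵥ y = W := by
    rw [hWdef, hxdef, hydef]; exact yy_eq_xx
  have hQymax : y ⬝ᵥ ((G.lapMatrix ℝ) *ᵥ y) ≤ lapEig G n * W := by
    rw [hlapn, ← hyy]
    exact quad_le_max hherm hn1 y
  -- W bound
  have hWk := Wk_bound (u₀ := u₀) (u₁ := u₁) (k := k) hd hreg he
  rw [← hNkdef, ← htkdef, ← hxdef, ← hWdef] at hWk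
  have hkpos : (0:ℝ) < (k:ℝ) + 1 := by positivity
  have hNk0 : 0 ≤ Nk * tk := by
    have hd1 : (0:ℝ) ≤ (d:ℝ)-1 := by linarith
    have ht : (0:ℝ) ≤ tk := by
      rw [htkdef]
      positivity
    have hN : (0:ℝ) ≤ Nk := by
      rw [hNkdef]
      positivity
    exact mul_nonneg hN ht
  have hNkW : Nk * tk ≤ W / ((k:ℝ)+1) := by
    rw [le_div_iff₀ hkpos]; linarith
  have h1Ac : (0:ℝ) ≤ 1 - Ac := by linarith
  -- assemble
  rw [hQx]
  have hstep : (∑ a, ∑ b, (if G.Adj a b then (x a - x b)^2 else 0))/2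
      ≤ Ac * (y ⬝ᵥ ((G.lapMatrix ℝ) *ᵥ y)) + (1-Ac) * (((d:ℝ)-1) * (Nk * tk)) := by
    rw [hQy]
    linarith
  refine le_trans hstep ?_
  have hfin1 : Ac * (y ⬝ᵥ ((G.lapMatrix ℝ) *ᵥ y)) ≤ Ac * (lapEig G n * W) :=
    mul_le_mul_of_nonneg_left hQymax hAc0
  have hfin2 : (1-Ac) * (((d:ℝ)-1) * (Nk * tk)) ≤ (1-Ac) * (((d:ℝ)-1) * (W / ((k:ℝ)+1))) := by
    apply mul_le_mul_of_nonneg_left _ h1Ac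
    apply mul_le_mul_of_nonneg_left hNkW (by linarith)
  calc Ac * (y ⬝ᵥ ((G.lapMatrix ℝ) *ᵥ y)) + (1-Ac) * (((d:ℝ)-1) * (Nk * tk))
      ≤ Ac * (lapEig G n * W) + (1-Ac) * (((d:ℝ)-1) * (W / ((k:ℝ)+1))) := by linarith
    _ = (Ac * lapEig G n + (1 - Ac) * ((d:ℝ)-1) / ((k:ℝ)+1)) * W := by
        field_simp
end edgeest

lemma lapn_ge_d {n d : ℕ} {G : SimpleGraph (Fin n)} (hreg : G.IsRegularOfDegree d)
    (u₀ : Fin n) (hn1 : n - 1 < n) : (d:ℝ) ≤ lapEig G n := by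
  set g : Fin n → ℝ := fun v => if v = u₀ then 1 else 0 with hg
  have hgg : g ⬝ᵥ g = 1 := by
    unfold dotProduct
    have hpt : ∀ v : Fin n, g v * g v = if v = u₀ then (1:ℝ) else 0 := by
      intro v
      by_cases h : v = u₀
      · rw [hg]; simp only [if_pos h]; ring
      · rw [hg]; simp only [if_neg h]; ring
    rw [Finset.sum_congr rfl (fun v _ => hpt v), ← Finset.sum_filter, Finset.sum_const]
    have : Finset.univ.filter (fun v => v = u₀) = {u₀} := by
      ext v; simp
    rw [this]
    simp
  have hdeg : ∀ a : Fin n, (Finset.univ.filter (fun b => G.Adj a b)).card = d := by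
    intro a
    have : Finset.univ.filter (fun b => G.Adj a b) = G.neighborFinset a := by
      ext b; simp [SimpleGraph.mem_neighborFinset]
    rw [this]; exact hreg a
  have hSS : ∑ a, ∑ b, (if G.Adj a b then (g a - g b)^2 else 0) = 2*(d:ℝ) := by
    have hpt : ∀ a b : Fin n, (if G.Adj a b then (g a - g b)^2 else 0)
        = (if (a = u₀ ∧ G.Adj a b) then (1:ℝ) else 0)
          + (if (b = u₀ ∧ G.Adj a b) then (1:ℝ) else 0) := by
      intro a b
      by_cases hab : G.Adj a b
      · rw [if_pos hab]
        by_cases ha : a = u₀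
        · have hb : ¬ b = u₀ := by rintro rfl; exact hab.ne (by rw [ha])
          rw [if_pos ⟨ha, hab⟩, if_neg (by tauto), hg]
          simp only [if_pos ha, if_neg hb]
          ring
        · by_cases hb : b = u₀
          · rw [if_neg (by tauto), if_pos ⟨hb, hab⟩, hg]
            simp only [if_pos hb, if_neg ha]
            ring
          · rw [if_neg (by tauto), if_neg (by tauto), hg]
            simp only [if_neg ha, if_neg hb]
            ring
      · rw [if_neg hab, if_neg (by tauto), if_neg (by tauto)]; ring
    rw [Finset.sum_congr rfl (fun a _ => Finset.sum_congr rfl (fun b _ => hpt a b))]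
    have hsplit : ∀ a : Fin n, ∑ b, ((if (a = u₀ ∧ G.Adj a b) then (1:ℝ) else 0)
        + (if (b = u₀ ∧ G.Adj a b) then (1:ℝ) else 0))
        = (∑ b, (if (a = u₀ ∧ G.Adj a b) then (1:ℝ) else 0))
          + (∑ b, (if (b = u₀ ∧ G.Adj a b) then (1:ℝ) else 0)) := by
      intro a; rw [Finset.sum_add_distrib]
    rw [Finset.sum_congr rfl (fun a _ => hsplit a), Finset.sum_add_distrib]
    have h1 : ∑ a, ∑ b, (if (a = u₀ ∧ G.Adj a b) then (1:ℝ) else 0) = (d:ℝ) := by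
      rw [Finset.sum_eq_single u₀]
      · have : ∀ b : Fin n, (if (u₀ = u₀ ∧ G.Adj u₀ b) then (1:ℝ) else 0)
            = (if G.Adj u₀ b then (1:ℝ) else 0) := by
          intro b
          by_cases h : G.Adj u₀ b
          · rw [if_pos ⟨rfl, h⟩, if_pos h]
          · rw [if_neg (by tauto), if_neg h]
        rw [Finset.sum_congr rfl (fun b _ => this b), ← Finset.sum_filter,
          Finset.sum_const, hdeg u₀]
        simp
      · intro a _ ha
        apply Finset.sum_eq_zero
        intro b _
        rw [if_neg (by tauto)]
      · intro h; exact absurd (Finset.mem_univ u₀) h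
    have h2 : ∑ a, ∑ b, (if (b = u₀ ∧ G.Adj a b) then (1:ℝ) else 0) = (d:ℝ) := by
      rw [Finset.sum_comm]
      rw [Finset.sum_eq_single u₀]
      · have : ∀ a : Fin n, (if (u₀ = u₀ ∧ G.Adj a u₀) then (1:ℝ) else 0)
            = (if G.Adj u₀ a then (1:ℝ) else 0) := by
          intro a
          by_cases h : G.Adj a u₀
          · rw [if_pos ⟨rfl, h⟩, if_pos h.symm]
          · rw [if_neg (by tauto), if_neg (fun hc => h hc.symm)]
        rw [Finset.sum_congr rfl (fun a _ => this a), ← Finset.sum_filter,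
          Finset.sum_const, hdeg u₀]
        simp
      · intro b _ hb
        apply Finset.sum_eq_zero
        intro a _
        rw [if_neg (by tauto)]
      · intro h; exact absurd (Finset.mem_univ u₀) h
    rw [h1, h2]; ring
  have hQ : g ⬝ᵥ ((G.lapMatrix ℝ) *ᵥ g) = (d:ℝ) := by
    rw [Qbridge, hSS]; ring
  have hherm : (G.lapMatrix ℝ).IsHermitian := (SimpleGraph.posSemidef_lapMatrix ℝ G).1
  have := quad_le_max hherm hn1 g
  rw [hQ, hgg, mul_one] at this
  rw [lapEig, dif_pos hn1]
  exact this

lemma far_aux {n : ℕ} {G : SimpleGraph (Fin n)} {k : ℕ} {a c w : Fin n}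
    (h : ((2*k+2 : ℕ) : ℕ∞) ≤ G.edist a c)
    (h1 : G.edist a w ≤ (k : ℕ∞)) (h2 : G.edist c w ≤ ((k+1:ℕ) : ℕ∞)) : False := by
  have ht := G.edist_triangle (u := a) (v := w) (w := c)
  rw [show G.edist c w = G.edist w c from SimpleGraph.edist_comm] at h2
  have hle : G.edist a c ≤ (k:ℕ∞) + ((k+1:ℕ):ℕ∞) := le_trans ht (add_le_add h1 h2)
  have hcast : (k:ℕ∞) + ((k+1:ℕ):ℕ∞) = ((2*k+1:ℕ):ℕ∞) := by
    rw [← Nat.cast_add]; congr 1; omega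
  rw [hcast] at hle
  have := le_trans h hle
  have hnat : 2*k+2 ≤ 2*k+1 := by exact_mod_cast this
  omega


set_option maxHeartbeats 1000000 in
/-- Let `d ≥ 2`, `k ≥ 1`, and let `G` be an `n`-vertex `d`-regular graph
containing two edges `u₀u₁` and `v₀v₁` at distance at least `2k+2` (all four endpoint
distances, measured in `ℕ∞`, are at least `2k+2`). Then
`λ₂(G)/λₙ(G) < (d-2√(d-1))/(d+2√(d-1)) + 4/((k+1)√(d-1))`. -/
theorem stmt9 {n : ℕ} (d k : ℕ) (hd : 2 ≤ d) (hk : 1 ≤ k)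
    (G : SimpleGraph (Fin n)) (hreg : G.IsRegularOfDegree d)
    (u₀ u₁ v₀ v₁ : Fin n) (he : G.Adj u₀ u₁) (hf : G.Adj v₀ v₁)
    (h00 : ((2 * k + 2 : ℕ) : ℕ∞) ≤ G.edist u₀ v₀)
    (h01 : ((2 * k + 2 : ℕ) : ℕ∞) ≤ G.edist u₀ v₁)
    (h10 : ((2 * k + 2 : ℕ) : ℕ∞) ≤ G.edist u₁ v₀)
    (h11 : ((2 * k + 2 : ℕ) : ℕ∞) ≤ G.edist u₁ v₁) :
    lapEig G 2 / lapEig G n <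
      ((d : ℝ) - 2 * Real.sqrt ((d : ℝ) - 1)) / ((d : ℝ) + 2 * Real.sqrt ((d : ℝ) - 1)) +
        4 / (((k : ℝ) + 1) * Real.sqrt ((d : ℝ) - 1)) := by
  have hn0 : 0 < n := u₀.pos
  have h2n : 1 < n := by
    by_contra hc
    push_neg at hc
    have h1 := u₀.isLt
    have h2 := u₁.isLt
    exact he.ne (Fin.ext (by omega))
  have hn1 : n - 1 < n := by omega
  -- basic constants
  have hs1 : 1 ≤ Real.sqrt ((d:ℝ)-1) := s_one_le hd
  have hss : Real.sqrt ((d:ℝ)-1) * Real.sqrt ((d:ℝ)-1) = (d:ℝ)-1 := s_mul_self hd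
  have h2d : (2:ℝ) ≤ (d:ℝ) := by exact_mod_cast hd
  have h1k : (1:ℝ) ≤ (k:ℝ) := by exact_mod_cast hk
  -- the two test vectors
  have hQxe := edge_est (u₀ := u₀) (u₁ := u₁) hd hk hreg he hn1
  have hQxf := edge_est (u₀ := v₀) (u₁ := v₁) hd hk hreg hf hn1
  set s := Real.sqrt ((d:ℝ)-1) with hsdef
  set Ac := ((d:ℝ) - 2*s) / ((d:ℝ) + 2*s) with hAcdef
  set xe := xvec G u₀ u₁ d k with hxedef
  set xf := xvec G v₀ v₁ d k with hxfdef
  set ρ := Ac * lapEig G n + (1 - Ac) * ((d:ℝ)-1) / ((k:ℝ)+1) with hρdef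
  have hdpos : (0:ℝ) < (d:ℝ) + 2*s := by linarith
  have hAc0 : 0 ≤ Ac := by
    apply div_nonneg _ (le_of_lt hdpos); nlinarith
  have hAc1 : Ac ≤ 1 := by rw [hAcdef, div_le_one hdpos]; linarith
  have hLn : (d:ℝ) ≤ lapEig G n := lapn_ge_d hreg u₀ hn1
  have hLnpos : (0:ℝ) < lapEig G n := by linarith
  -- disjointness of supports
  have hdisjf : ∀ v, eDe G u₀ u₁ v ≤ (k:ℕ∞) → eDe G v₀ v₁ v ≤ (k:ℕ∞) → False := by
    intro v hv1 hv2
    rw [eDe, min_le_iff] at hv1 hv2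
    have hkk1 : (k:ℕ∞) ≤ ((k+1:ℕ):ℕ∞) := by exact_mod_cast Nat.cast_le.mpr (Nat.le_succ k)
    rcases hv1 with h1 | h1 <;> rcases hv2 with h2 | h2
    · exact far_aux h00 h1 (le_trans h2 hkk1)
    · exact far_aux h01 h1 (le_trans h2 hkk1)
    · exact far_aux h10 h1 (le_trans h2 hkk1)
    · exact far_aux h11 h1 (le_trans h2 hkk1)
  have hcross : ∀ a b, G.Adj a b → eDe G u₀ u₁ a ≤ (k:ℕ∞) → eDe G v₀ v₁ b ≤ (k:ℕ∞) → False := by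
    intro a b hab ha hb
    rw [eDe, min_le_iff] at ha hb
    have hab1 : G.edist b a ≤ 1 := by simpa using G.edist_le hab.symm.toWalk
    have hstep : ∀ c : Fin n, G.edist c b ≤ (k:ℕ∞) → G.edist c a ≤ ((k+1:ℕ):ℕ∞) := by
      intro c hc
      have ht := G.edist_triangle (u := c) (v := b) (w := a)
      have : G.edist c a ≤ (k:ℕ∞) + 1 := le_trans ht (add_le_add hc hab1)
      rwa [show (k:ℕ∞) + 1 = ((k+1:ℕ):ℕ∞) from by push_cast; rfl] at this
    rcases ha with h1 | h1 <;> rcases hb with h2 | h2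
    · exact far_aux h00 h1 (hstep _ h2)
    · exact far_aux h01 h1 (hstep _ h2)
    · exact far_aux h10 h1 (hstep _ h2)
    · exact far_aux h11 h1 (hstep _ h2)
  -- pointwise orthogonality facts
  have P1 : ∀ v, xe v * xf v = 0 := by
    intro v
    by_cases h1 : xe v = 0
    · rw [h1, zero_mul]
    · have h2 : xf v = 0 := by
        by_contra h2
        exact hdisjf v (xvec_supp h1) (xvec_supp h2)
      rw [h2, mul_zero]
  have P2 : ∀ a b, G.Adj a b → (xe a = 0 ∧ xe b = 0) ∨ (xf a = 0 ∧ xf b = 0) := by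
    intro a b hab
    by_cases h1 : xe a = 0
    · by_cases h2 : xe b = 0
      · exact Or.inl ⟨h1, h2⟩
      · refine Or.inr ⟨?_, ?_⟩
        · by_contra h3
          exact hcross b a hab.symm (xvec_supp h2) (xvec_supp h3)
        · by_contra h3
          exact hdisjf b (xvec_supp h2) (xvec_supp h3)
    · refine Or.inr ⟨?_, ?_⟩
      · by_contra h3
        exact hdisjf a (xvec_supp h1) (xvec_supp h3)
      · by_contra h3
        exact hcross a b hab (xvec_supp h1) (xvec_supp h3)
  -- choose the combination orthogonal to the bottom eigenvector
  have hherm : (G.lapMatrix ℝ).IsHermitian := (SimpleGraph.posSemidef_lapMatrix ℝ G).1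
  set i0 : Fin n := Tuple.sort hherm.eigenvalues ⟨0, by omega⟩ with hi0
  set c1 := coeffs hherm xe i0 with hc1
  set c2 := coeffs hherm xf i0 with hc2
  obtain ⟨α, β, hne, hlin⟩ : ∃ α β : ℝ, ¬(α = 0 ∧ β = 0) ∧ α*c1 + β*c2 = 0 := by
    by_cases hc : c1 = 0 ∧ c2 = 0
    · exact ⟨1, 0, by norm_num, by rw [hc.1, hc.2]; ring⟩
    · refine ⟨c2, -c1, ?_, by ring⟩
      rintro ⟨hh1, hh2⟩
      exact hc ⟨neg_eq_zero.mp hh2, hh1⟩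
  set z : Fin n → ℝ := fun v => α * xe v + β * xf v with hzdef
  have hcoef : coeffs hherm z i0 = 0 := by
    have := congrFun (coeffs_linear hherm α β xe xf) i0
    rw [hzdef]
    rw [this]
    rw [← hc1, ← hc2]
    exact hlin
  -- norm of z
  have hzz : z ⬝ᵥ z = α^2 * (xe ⬝ᵥ xe) + β^2 * (xf ⬝ᵥ xf) := by
    unfold dotProduct
    rw [Finset.mul_sum, Finset.mul_sum, ← Finset.sum_add_distrib]
    apply Finset.sum_congr rfl
    intro v _
    simp only [hzdef]
    linear_combination (2*α*β) * P1 v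
  have hzzpos : 0 < z ⬝ᵥ z := by
    have hxe := xx_pos (G := G) (u₀ := u₀) (u₁ := u₁) (d := d) (k := k)
    have hxf := xx_pos (G := G) (u₀ := v₀) (u₁ := v₁) (d := d) (k := k)
    rw [← hxedef] at hxe
    rw [← hxfdef] at hxf
    rw [hzz]
    rcases not_and_or.mp hne with hα | hβ
    · have h1 : 0 < α^2 := by positivity
      nlinarith [sq_nonneg β]
    · have h1 : 0 < β^2 := by positivity
      nlinarith [sq_nonneg α]
  -- quadratic form of z
  have hQz : z ⬝ᵥ ((G.lapMatrix ℝ) *ᵥ z)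
      = α^2 * (xe ⬝ᵥ ((G.lapMatrix ℝ) *ᵥ xe)) + β^2 * (xf ⬝ᵥ ((G.lapMatrix ℝ) *ᵥ xf)) := by
    rw [Qbridge (G := G) z, Qbridge (G := G) xe, Qbridge (G := G) xf]
    have hpt : ∀ a b : Fin n, (if G.Adj a b then (z a - z b)^2 else 0)
        = α^2 * (if G.Adj a b then (xe a - xe b)^2 else 0)
          + β^2 * (if G.Adj a b then (xf a - xf b)^2 else 0) := by
      intro a b
      by_cases hab : G.Adj a b
      · rw [if_pos hab, if_pos hab, if_pos hab]
        simp only [hzdef]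
        rcases P2 a b hab with ⟨h1, h2⟩ | ⟨h1, h2⟩ <;> simp only [h1, h2] <;> ring
      · rw [if_neg hab, if_neg hab, if_neg hab]; ring
    rw [Finset.sum_congr rfl (fun a _ => Finset.sum_congr rfl (fun b _ => hpt a b))]
    have : ∀ a : Fin n, ∑ b, (α^2 * (if G.Adj a b then (xe a - xe b)^2 else 0)
        + β^2 * (if G.Adj a b then (xf a - xf b)^2 else 0))
        = α^2 * (∑ b, if G.Adj a b then (xe a - xe b)^2 else 0)
          + β^2 * (∑ b, if G.Adj a b then (xf a - xf b)^2 else 0) := by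
      intro a
      rw [Finset.sum_add_distrib, Finset.mul_sum, Finset.mul_sum]
    rw [Finset.sum_congr rfl (fun a _ => this a), Finset.sum_add_distrib]
    rw [← Finset.mul_sum, ← Finset.mul_sum]
    ring
  have hQzρ : z ⬝ᵥ ((G.lapMatrix ℝ) *ᵥ z) ≤ ρ * (z ⬝ᵥ z) := by
    rw [hQz, hzz]
    have e1 : α^2 * (xe ⬝ᵥ ((G.lapMatrix ℝ) *ᵥ xe)) ≤ α^2 * (ρ * (xe ⬝ᵥ xe)) :=
      mul_le_mul_of_nonneg_left hQxe (sq_nonneg α)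
    have e2 : β^2 * (xf ⬝ᵥ ((G.lapMatrix ℝ) *ᵥ xf)) ≤ β^2 * (ρ * (xf ⬝ᵥ xf)) :=
      mul_le_mul_of_nonneg_left hQxf (sq_nonneg β)
    calc α^2 * (xe ⬝ᵥ ((G.lapMatrix ℝ) *ᵥ xe)) + β^2 * (xf ⬝ᵥ ((G.lapMatrix ℝ) *ᵥ xf))
        ≤ α^2 * (ρ * (xe ⬝ᵥ xe)) + β^2 * (ρ * (xf ⬝ᵥ xf)) := by linarith
      _ = ρ * (α^2 * (xe ⬝ᵥ xe) + β^2 * (xf ⬝ᵥ xf)) := by ring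
  -- second eigenvalue bound
  have hL2 : lapEig G 2 ≤ ρ := by
    have hs := second_le_quad hherm h2n z hcoef
    have : sortedEigs (G.lapMatrix ℝ) ⟨1, h2n⟩ ≤ ρ :=
      le_of_mul_le_mul_right (le_trans hs hQzρ) hzzpos
    rw [lapEig, dif_pos (show 2 - 1 < n by omega)]
    exact this
  -- final arithmetic
  have hkpos : (0:ℝ) < (k:ℝ) + 1 := by linarith
  have h1mAc : 1 - Ac = 4*s/((d:ℝ)+2*s) := by
    rw [hAcdef]
    field_simp
    ring
  have hdiv1 : lapEig G 2 / lapEig G n ≤ Ac + ((1-Ac)*((d:ℝ)-1))/(((k:ℝ)+1) * lapEig G n) := by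
    have h1 : lapEig G 2 / lapEig G n ≤ ρ / lapEig G n :=
      div_le_div_of_nonneg_right hL2 hLnpos.le
    have h2 : ρ / lapEig G n = Ac + ((1-Ac)*((d:ℝ)-1))/(((k:ℝ)+1) * lapEig G n) := by
      rw [hρdef]
      field_simp
    rw [h2] at h1
    exact h1
  have hkspos : (0:ℝ) < ((k:ℝ)+1) * s := by positivity
  have hkLpos : (0:ℝ) < ((k:ℝ)+1) * lapEig G n := by positivity
  have h2fin : ((1-Ac)*((d:ℝ)-1))/(((k:ℝ)+1) * lapEig G n) < 4/(((k:ℝ)+1)*s) := by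
    rw [h1mAc, div_lt_div_iff₀ hkLpos hkspos, div_mul_eq_mul_div, div_mul_eq_mul_div,
      div_lt_iff₀ hdpos]
    have hds : (d:ℝ) ≤ (d:ℝ)*s := le_mul_of_one_le_right (by linarith) hs1
    have hsq : ((d:ℝ)-1)*((d:ℝ)-1) = (d:ℝ)*(d:ℝ) - 2*(d:ℝ) + 1 := by ring
    have hrhs : (d:ℝ)*((d:ℝ)+2*s) = (d:ℝ)*(d:ℝ) + 2*((d:ℝ)*s) := by ring
    have key : ((d:ℝ)-1)*((d:ℝ)-1) < (d:ℝ)*((d:ℝ)+2*s) := by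
      rw [hsq, hrhs]; linarith
    have hk41 : (0:ℝ) < 4*((k:ℝ)+1) := by linarith
    calc 4*s*((d:ℝ)-1)*(((k:ℝ)+1)*s) = 4*((k:ℝ)+1)*((s*s)*((d:ℝ)-1)) := by ring
      _ = 4*((k:ℝ)+1)*(((d:ℝ)-1)*((d:ℝ)-1)) := by rw [hss]
      _ < 4*((k:ℝ)+1)*((d:ℝ)*((d:ℝ)+2*s)) := by
          exact mul_lt_mul_of_pos_left key hk41
      _ = (4*((k:ℝ)+1)*((d:ℝ)+2*s))*(d:ℝ) := by ring
      _ ≤ (4*((k:ℝ)+1)*((d:ℝ)+2*s))*lapEig G n :=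
          mul_le_mul_of_nonneg_left hLn (mul_pos hk41 hdpos).le
      _ = 4*(((k:ℝ)+1)*lapEig G n)*((d:ℝ)+2*s) := by ring
  linarith
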